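/- The second-level Paperfolding sequence (Π^{(2)}_i)_{i≥1}, with values in {0,1,2,3}, equals the image under the coding υ (υ(A)=0, υ(B)=0, υ(C)=1, υ(D)=0, υ(E)=2, υ(F)=1, υ(G)=3, υ(H)=2, υ(I)=1, υ(J)=3, υ(K)=2, υ(L)=3) of the fixed point starting from A of the 2-morphism χ on {A,…,L} given by χ(A)=AB, χ(B)=CD, χ(C)=EF, χ(D)=GD, χ(E)=AH, χ(F)=CI, χ(G)=EJ, χ(H)=CK, χ(I)=GI, χ(J)=CL, χ(K)=GK, χ(L)=GL. -/
import Mathlib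


/-- The `n`-th level Paperfolding sequence. -/
def paperfolding (n i : ℕ) : ℕ :=
  ((i / 2 ^ (padicValNat 2 i)) % 2 ^ (n + 1) - 1) / 2

/-- The 12-letter alphabet `{A, …, L}`. -/
inductive Λ | A | B | C | D | E | F | G | H | I | J | K | L
  deriving DecidableEq

open Λ in
/-- The uniform 2-morphism `χ`. -/
def χ : Λ → List Λ
  | A => [A, B]
  | B => [C, D]
  | C => [E, F]
  | D => [G, D]
  | E => [A, H]
  | F => [C, I]
  | G => [E, J]
  | H => [C, K]
  | I => [G, I]
  | J => [C, L]
  | K => [G, K]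
  | L => [G, L]

open Λ in
/-- The coding `υ`. -/
def υ : Λ → ℕ
  | A => 0
  | B => 0
  | C => 1
  | D => 0
  | E => 2
  | F => 1
  | G => 3
  | H => 2
  | I => 1
  | J => 3
  | K => 2
  | L => 3


open Λ in
/-- Auxiliary coding recording the residue mod 4 of positions where a letter occurs. -/
def cc : Λ → ℕ
  | A => 0 | B => 1 | C => 2 | D => 3 | E => 0 | F => 1
  | G => 2 | H => 1 | I => 3 | J => 1 | K => 3 | L => 3

lemma pf_odd (j : ℕ) : paperfolding 2 (2 * j + 1) = j % 4 := by
  have hv : padicValNat 2 (2 * j + 1) = 0 :=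
    padicValNat.eq_zero_of_not_dvd (by omega)
  simp only [paperfolding, hv, pow_zero, Nat.div_one]
  omega

lemma pf_even (j : ℕ) : paperfolding 2 (2 * j + 2) = paperfolding 2 (j + 1) := by
  have h : 2 * j + 2 = 2 * (j + 1) := by ring
  have hv : padicValNat 2 (2 * (j + 1)) = padicValNat 2 (j + 1) + 1 := by
    rw [padicValNat.mul (p := 2) two_ne_zero (by omega : j + 1 ≠ 0),
      padicValNat.self one_lt_two]
    omega
  simp only [paperfolding, h, hv, pow_succ]
  rw [show 2 ^ padicValNat 2 (j+1) * 2 = 2 * 2 ^ padicValNat 2 (j+1) by ring,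
    Nat.mul_div_mul_left _ _ (by norm_num)]

lemma key (f : ℕ → Λ) (h0 : f 0 = Λ.A)
    (hfix : ∀ j : ℕ, χ (f j) = [f (2 * j), f (2 * j + 1)]) :
    ∀ j : ℕ, j % 4 = cc (f j) ∧ paperfolding 2 (j + 1) = υ (f j) := by
  intro j
  induction j using Nat.strong_induction_on with
  | _ j ih =>
    match j with
    | 0 =>
      rw [h0]
      refine ⟨rfl, ?_⟩
      simp [paperfolding, padicValNat.one, υ]
    | (j + 1) =>
      obtain ⟨m, hm | hm⟩ := Nat.even_or_odd' (j + 1)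
      · obtain ⟨h1, h2⟩ := ih m (by omega)
        have hf := hfix m
        rw [hm]
        cases hℓ : f m <;>
          (rw [hℓ] at h1 hf;
           simp only [χ, List.cons.injEq, and_true] at hf;
           rw [← hf.1, pf_odd];
           simp only [cc, υ, and_true] at h1 ⊢;
           omega)
      · obtain ⟨h1, h2⟩ := ih m (by omega)
        have hf := hfix m
        rw [hm]
        cases hℓ : f m <;>
          (rw [hℓ] at h1 h2 hf;
           simp only [χ, List.cons.injEq, and_true] at hf;
           rw [← hf.2, show 2 * m + 1 + 1 = 2 * m + 2 from rfl, pf_even, h2];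
           simp only [cc, υ, and_true] at h1 ⊢;
           omega)

/-- The second-level Paperfolding sequence equals the image under the coding `υ`
of the fixed point of `χ` starting from `A`. -/
theorem paperfolding_two_automatic (f : ℕ → Λ) (h0 : f 0 = Λ.A)
    (hfix : ∀ j : ℕ, χ (f j) = [f (2 * j), f (2 * j + 1)]) :
    ∀ j : ℕ, paperfolding 2 (j + 1) = υ (f j) := by
  intro j
  exact (key f h0 hfix j).2
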